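/- If λ_1, ..., λ_{n-1} ≤ 0 satisfy ∑_{j=1}^{n-1} λ_j ≥ -1/2, then the symmetric matrix P(Λ) = QΛQ^T is doubly stochastic. -/

import Mathlib

open Real Matrix Finset

lemma sum_exp_zero (n j : ℕ) (hj0 : 0 < j) (hjn : j < n) :
    ∑ l ∈ Finset.range n, Complex.exp ((2 * Real.pi * j / n : ℝ) * Complex.I) ^ l = 0 := by
  have hn : 0 < n := lt_trans hj0 hjn
  set c : ℂ := Complex.exp ((2 * Real.pi * j / n : ℝ) * Complex.I) with hc
  have hcn : c ^ n = 1 := by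
    rw [hc, ← Complex.exp_nat_mul]
    rw [Complex.exp_eq_one_iff]
    refine ⟨j, ?_⟩
    have hn' : (n : ℂ) ≠ 0 := Nat.cast_ne_zero.mpr hn.ne'
    push_cast
    field_simp
  have hc1 : c ≠ 1 := by
    intro h
    rw [hc, Complex.exp_eq_one_iff] at h
    obtain ⟨k, hk⟩ := h
    have hI : ((2 * Real.pi * j / n : ℝ) : ℂ) = k * (2 * Real.pi) := by
      have hIne : (Complex.I : ℂ) ≠ 0 := Complex.I_ne_zero
      have hk' : (2 * Real.pi * j / n : ℝ) * Complex.I = ((k:ℂ) * (2 * Real.pi)) * Complex.I := by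
        rw [hk]; ring
      have := mul_right_cancel₀ hIne hk'
      push_cast at this ⊢
      exact this
    have hre : (2 * Real.pi * j / n : ℝ) = k * (2 * Real.pi) := by
      exact_mod_cast hI
    have hpi : (0:ℝ) < Real.pi := Real.pi_pos
    have hjr : (j:ℝ) / n = k := by
      field_simp at hre
      have h2 : (2 * Real.pi) * ((j:ℝ)) = (2 * Real.pi) * ((k:ℝ) * n) := by rw [hre]; ring
      have := mul_left_cancel₀ (by positivity : (2*Real.pi:ℝ) ≠ 0) h2
      rw [this]
      field_simp
    have h0 : (0:ℝ) < (j:ℝ)/n := by positivity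
    have h1 : (j:ℝ)/n < 1 := by
      rw [div_lt_one (by positivity)]
      exact_mod_cast hjn
    rw [hjr] at h0 h1
    have : (0:ℤ) < k := by exact_mod_cast h0
    have : (k:ℤ) < 1 := by exact_mod_cast h1
    omega
  rw [geom_sum_eq hc1, hcn]
  simp

lemma sum_sin_zero (n j : ℕ) (hj0 : 0 < j) (hjn : j < n) :
    ∑ l : Fin n, Real.sin (2 * Real.pi * l * j / n + Real.pi / 4) = 0 := by
  have hn : 0 < n := lt_trans hj0 hjn
  have key : ∑ l : Fin n, Complex.exp ((2 * Real.pi * l * j / n + Real.pi / 4 : ℝ) * Complex.I) = 0 := by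
    have h0 := sum_exp_zero n j hj0 hjn
    rw [show (∑ l : Fin n, Complex.exp ((2 * Real.pi * l * j / n + Real.pi / 4 : ℝ) * Complex.I)) = ∑ l ∈ Finset.range n, Complex.exp ((2 * Real.pi * l * j / n + Real.pi / 4 : ℝ) * Complex.I) from (Fin.sum_univ_eq_sum_range (fun l => Complex.exp ((2 * Real.pi * l * j / n + Real.pi / 4 : ℝ) * Complex.I)) n)]
    calc ∑ l ∈ Finset.range n, Complex.exp ((2 * Real.pi * l * j / n + Real.pi / 4 : ℝ) * Complex.I)
        = ∑ l ∈ Finset.range n, Complex.exp ((Real.pi / 4 : ℝ) * Complex.I) *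
            Complex.exp ((2 * Real.pi * j / n : ℝ) * Complex.I) ^ l := by
          refine Finset.sum_congr rfl fun l _ => ?_
          rw [← Complex.exp_nat_mul, ← Complex.exp_add]
          congr 1
          push_cast
          have hn' : (n : ℂ) ≠ 0 := Nat.cast_ne_zero.mpr hn.ne'
          field_simp
          ring
      _ = 0 := by rw [← Finset.mul_sum, h0, mul_zero]
  have := congrArg Complex.im key
  rw [Complex.im_sum] at this
  simp only [Complex.exp_ofReal_mul_I_im] at this
  simpa using this

theorem stmt_10 (n : ℕ) (hn : 1 ≤ n)
    (Q : Matrix (Fin n) (Fin n) ℝ)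
    (hQ : ∀ k j : Fin n,
      Q k j = Real.sqrt (2 / n) * Real.sin (2 * Real.pi * k * j / n + Real.pi / 4))
    (lam : Fin n → ℝ) (hlam0 : lam ⟨0, by omega⟩ = 1)
    (hneg : ∀ j : Fin n, j ≠ ⟨0, by omega⟩ → lam j ≤ 0)
    (hsum : ∑ j ∈ Finset.univ \ {(⟨0, by omega⟩ : Fin n)}, lam j ≥ -(1 / 2)) :
    (Q * Matrix.diagonal lam * Qᵀ)ᵀ = Q * Matrix.diagonal lam * Qᵀ ∧
    (∀ k l : Fin n, 0 ≤ (Q * Matrix.diagonal lam * Qᵀ) k l) ∧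
    (∀ k : Fin n, ∑ l : Fin n, (Q * Matrix.diagonal lam * Qᵀ) k l = 1) ∧
    (∀ l : Fin n, ∑ k : Fin n, (Q * Matrix.diagonal lam * Qᵀ) k l = 1) := by
  have hn0 : (0:ℝ) < n := by positivity
  set z : Fin n := ⟨0, by omega⟩ with hz
  -- entry formula
  have hP : ∀ k l : Fin n, (Q * Matrix.diagonal lam * Qᵀ) k l
      = ∑ j : Fin n, Q k j * lam j * Q l j := by
    intro k l
    rw [Matrix.mul_apply]
    refine Finset.sum_congr rfl fun j _ => ?_
    rw [Matrix.mul_diagonal, Matrix.transpose_apply]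
  have h2n : (0:ℝ) ≤ 2 / n := by positivity
  have hsq : Real.sqrt (2 / n) * Real.sqrt (2 / n) = 2 / n := Real.mul_self_sqrt h2n
  have h2 : Real.sqrt 2 * Real.sqrt 2 = 2 := Real.mul_self_sqrt (by norm_num)
  have hQz : ∀ k : Fin n, Q k z = Real.sqrt (2 / n) * (Real.sqrt 2 / 2) := by
    intro k
    rw [hQ]
    have : ((z : ℕ) : ℝ) = 0 := by simp [hz]
    rw [show (2 * Real.pi * k * (z:ℕ) / n + Real.pi / 4 : ℝ) = Real.pi / 4 by
      rw [this]; ring]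
    rw [Real.sin_pi_div_four]
  have hQzz : ∀ k l : Fin n, Q k z * Q l z = 1 / n := by
    intro k l
    have hne : (n:ℝ) ≠ 0 := hn0.ne'
    calc Q k z * Q l z
        = (Real.sqrt (2/n) * Real.sqrt (2/n)) * ((Real.sqrt 2 * Real.sqrt 2)/4) := by
          rw [hQz, hQz]; ring
      _ = 1 / n := by rw [hsq, h2]; field_simp; ring
  -- bound on products
  have hQbd : ∀ k j : Fin n, |Q k j| ≤ Real.sqrt (2 / n) := by
    intro k j
    rw [hQ, abs_mul, abs_of_nonneg (Real.sqrt_nonneg _)]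
    calc Real.sqrt (2/n) * |Real.sin _| ≤ Real.sqrt (2/n) * 1 :=
          mul_le_mul_of_nonneg_left (Real.abs_sin_le_one _) (Real.sqrt_nonneg _)
      _ = Real.sqrt (2/n) := mul_one _
  have hprod : ∀ k l j : Fin n, Q k j * Q l j ≤ 2 / n := by
    intro k l j
    calc Q k j * Q l j ≤ |Q k j * Q l j| := le_abs_self _
      _ = |Q k j| * |Q l j| := abs_mul _ _
      _ ≤ Real.sqrt (2/n) * Real.sqrt (2/n) :=
          mul_le_mul (hQbd k j) (hQbd l j) (abs_nonneg _) (Real.sqrt_nonneg _)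
      _ = 2 / n := hsq
  -- column sums of Q
  have hcol : ∀ j : Fin n, j ≠ z → ∑ l : Fin n, Q l j = 0 := by
    intro j hj
    have hj0 : 0 < (j : ℕ) := by
      rcases Nat.eq_zero_or_pos (j : ℕ) with h | h
      · exact absurd (Fin.ext h) hj
      · exact h
    have hs := sum_sin_zero n j hj0 j.isLt
    calc ∑ l : Fin n, Q l j
        = Real.sqrt (2/n) * ∑ l : Fin n, Real.sin (2 * Real.pi * l * j / n + Real.pi / 4) := by
          rw [Finset.mul_sum]
          exact Finset.sum_congr rfl fun l _ => hQ l j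
      _ = 0 := by rw [hs, mul_zero]
  have hcolz : ∑ l : Fin n, Q l z = n * (Real.sqrt (2/n) * (Real.sqrt 2 / 2)) := by
    rw [Finset.sum_congr rfl fun l _ => hQz l]
    simp [Finset.card_univ]
  -- nonnegativity
  have hnonneg : ∀ k l : Fin n, 0 ≤ (Q * Matrix.diagonal lam * Qᵀ) k l := by
    intro k l
    rw [hP]
    have hsplit := Finset.sum_eq_sum_sdiff_singleton_add (Finset.mem_univ z)
      (fun j => Q k j * lam j * Q l j)
    rw [hsplit]
    have hterm : Q k z * lam z * Q l z = 1 / n := by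
      rw [show Q k z * lam z * Q l z = lam z * (Q k z * Q l z) by ring, hQzz, hlam0]
      ring
    have hS : ∑ j ∈ Finset.univ \ {z}, Q k j * lam j * Q l j ≥ -(1/n) := by
      have h1 : ∀ j ∈ Finset.univ \ {z}, lam j * (2/n) ≤ Q k j * lam j * Q l j := by
        intro j hj
        have hjz : j ≠ z := by
          simp only [Finset.mem_sdiff, Finset.mem_singleton] at hj
          exact hj.2
        have hl : lam j ≤ 0 := hneg j hjz
        have := mul_le_mul_of_nonpos_left (hprod k l j) hl
        calc lam j * (2/n) ≤ lam j * (Q k j * Q l j) := this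
          _ = Q k j * lam j * Q l j := by ring
      have h2' : ∑ j ∈ Finset.univ \ {z}, lam j * (2/n)
          ≤ ∑ j ∈ Finset.univ \ {z}, Q k j * lam j * Q l j := Finset.sum_le_sum h1
      have h3 : ∑ j ∈ Finset.univ \ {z}, lam j * (2/n)
          = (∑ j ∈ Finset.univ \ {z}, lam j) * (2/n) := (Finset.sum_mul _ _ _).symm
      have h4 : (∑ j ∈ Finset.univ \ {z}, lam j) * (2/n) ≥ (-(1/2)) * (2/n) :=
        mul_le_mul_of_nonneg_right hsum h2n
      have h5 : (-(1/2) : ℝ) * (2/n) = -(1/n) := by field_simp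
      linarith
    linarith [hS, hterm.ge, hterm.le]
  -- row sums
  have hrow : ∀ k : Fin n, ∑ l : Fin n, (Q * Matrix.diagonal lam * Qᵀ) k l = 1 := by
    intro k
    have : ∑ l : Fin n, (Q * Matrix.diagonal lam * Qᵀ) k l
        = ∑ j : Fin n, Q k j * lam j * (∑ l : Fin n, Q l j) := by
      simp only [hP]
      rw [Finset.sum_comm]
      exact Finset.sum_congr rfl fun j _ => by rw [Finset.mul_sum]
    rw [this]
    rw [Finset.sum_eq_single z]
    · rw [hcolz, show lam z = 1 from hlam0, hQz]
      have hne : (n:ℝ) ≠ 0 := hn0.ne'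
      rw [show Real.sqrt (2/n) * (Real.sqrt 2/2) * 1 * ((n:ℝ) * (Real.sqrt (2/n) * (Real.sqrt 2/2)))
          = (n:ℝ) * ((Real.sqrt (2/n) * Real.sqrt (2/n)) * ((Real.sqrt 2 * Real.sqrt 2)/4)) by ring,
        hsq, h2]
      field_simp
      norm_num
    · intro j _ hj
      rw [hcol j hj, mul_zero]
    · intro h
      exact absurd (Finset.mem_univ z) h
  -- symmetry
  have hsymm : (Q * Matrix.diagonal lam * Qᵀ)ᵀ = Q * Matrix.diagonal lam * Qᵀ := by
    rw [Matrix.transpose_mul, Matrix.transpose_mul, Matrix.transpose_transpose,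
      Matrix.diagonal_transpose, Matrix.mul_assoc]
  refine ⟨hsymm, hnonneg, hrow, ?_⟩
  intro l
  have : ∀ k, (Q * Matrix.diagonal lam * Qᵀ) k l = (Q * Matrix.diagonal lam * Qᵀ) l k := by
    intro k
    conv_lhs => rw [← hsymm]
    rfl
  rw [Finset.sum_congr rfl fun k _ => this k]
  exact hrow l
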